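/- For any positive integers j, k ≥ 1 there exists c = c(k,j) > 0 such that for every Schwartz function f on ℝ, ‖⟨x⟩^k ∂_x^j f‖_{L²}² ≤ c ‖⟨x⟩^{k−1} ∂_x^{j+1} f‖_{L²} · ‖⟨x⟩^{k+1} ∂_x^{j−1} f‖_{L²} + c ‖⟨x⟩^{k−1} ∂_x^{j−1} f‖_{L²}². -/

import Mathlib

open MeasureTheory

namespace WeightedGN

noncomputable def D : SchwartzMap ℝ ℂ →L[ℝ] SchwartzMap ℝ ℂ := SchwartzMap.derivCLM ℝ ℂ

lemma coe_iter_D (f : SchwartzMap ℝ ℂ) (n : ℕ) :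
    ⇑(D^[n] f) = iteratedDeriv n ⇑f := by
  induction n generalizing f with
  | zero => simp
  | succ m ih =>
    have hD : ⇑(D f) = deriv ⇑f := funext fun x => SchwartzMap.derivCLM_apply ℝ f x
    rw [Function.iterate_succ_apply, ih, hD, iteratedDeriv_succ']

lemma weight_le (m : ℕ) (x : ℝ) : (1 + x ^ 2) ^ m ≤ 2 ^ m * (1 + ‖x‖ ^ (2 * m)) := by
  have hx : (0:ℝ) ≤ x ^ 2 := sq_nonneg x
  have habs : ‖x‖ ^ (2*m) = (x ^ 2) ^ m := by
    rw [Real.norm_eq_abs, pow_mul, _root_.sq_abs]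
  rw [habs]
  rcases le_total (x ^ 2) 1 with h | h
  · calc (1 + x ^ 2) ^ m ≤ (2:ℝ) ^ m := by
          apply pow_le_pow_left₀ (by linarith) (by linarith)
       _ ≤ 2 ^ m * (1 + (x ^ 2) ^ m) := by
          nlinarith [pow_pos (show (0:ℝ) < 2 by norm_num) m, pow_nonneg hx m]
  · calc (1 + x ^ 2) ^ m ≤ (2 * x ^ 2) ^ m := by
          apply pow_le_pow_left₀ (by linarith) (by linarith)
       _ = 2 ^ m * (x ^ 2) ^ m := by rw [mul_pow]
       _ ≤ 2 ^ m * (1 + (x ^ 2) ^ m) := by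
          nlinarith [pow_pos (show (0:ℝ) < 2 by norm_num) m, pow_nonneg hx m]

lemma schwartz_bound (φ : SchwartzMap ℝ ℂ) : ∃ C : ℝ, 0 ≤ C ∧ ∀ x, ‖φ x‖ ≤ C := by
  obtain ⟨C, hCpos, hC⟩ := φ.decay 0 0
  refine ⟨C, hCpos.le, fun x => ?_⟩
  simpa using hC x

lemma integrable_weight (φ : SchwartzMap ℝ ℂ) (m : ℕ) :
    Integrable (fun x : ℝ => (1 + x ^ 2) ^ m * ‖φ x‖) volume := by
  have h1 : Integrable (fun x : ℝ => 2 ^ m * (‖φ x‖ + ‖x‖ ^ (2*m) * ‖φ x‖)) volume := by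
    exact ((φ.integrable (μ := volume)).norm.add (φ.integrable_pow_mul volume (2*m))).const_mul _
  refine h1.mono' ?_ ?_
  · exact (by continuity : Continuous fun x : ℝ => (1 + x ^ 2) ^ m * ‖φ x‖).aestronglyMeasurable
  · filter_upwards with x
    have h2 := weight_le m x
    have h3 : (0:ℝ) ≤ ‖φ x‖ := norm_nonneg _
    have h4 : (0:ℝ) ≤ (1 + x^2)^m := by positivity
    rw [Real.norm_eq_abs, _root_.abs_of_nonneg (by positivity)]
    nlinarith [pow_nonneg (norm_nonneg x) (2*m), pow_pos (show (0:ℝ)<2 by norm_num) m]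

lemma integrable_weight_sq (φ : SchwartzMap ℝ ℂ) (m : ℕ) :
    Integrable (fun x : ℝ => (1 + x ^ 2) ^ m * ‖φ x‖ ^ 2) volume := by
  obtain ⟨C, hC0, hC⟩ := schwartz_bound φ
  refine (((integrable_weight φ m).const_mul C).mono' ?_ ?_)
  · exact (by continuity : Continuous fun x : ℝ => (1 + x ^ 2) ^ m * ‖φ x‖ ^ 2).aestronglyMeasurable
  · filter_upwards with x
    have h4 : (0:ℝ) ≤ (1 + x^2)^m := by positivity
    rw [Real.norm_eq_abs, _root_.abs_of_nonneg (by positivity)]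
    calc (1 + x ^ 2) ^ m * ‖φ x‖ ^ 2 = (1 + x ^ 2) ^ m * ‖φ x‖ * ‖φ x‖ := by ring
      _ ≤ (1 + x ^ 2) ^ m * ‖φ x‖ * C := by
          exact mul_le_mul_of_nonneg_left (hC x) (by positivity)
      _ = C * ((1 + x ^ 2) ^ m * ‖φ x‖) := by ring

lemma sqrt_weight_sq (m : ℕ) (x : ℝ) (a : ℝ) :
    (Real.sqrt (1 + x ^ 2) ^ m * a) ^ 2 = (1 + x ^ 2) ^ m * a ^ 2 := by
  have h : Real.sqrt (1 + x ^ 2) ^ 2 = 1 + x ^ 2 := Real.sq_sqrt (by positivity)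
  calc (Real.sqrt (1 + x ^ 2) ^ m * a) ^ 2
      = (Real.sqrt (1 + x ^ 2) ^ 2) ^ m * a ^ 2 := by ring
    _ = (1 + x ^ 2) ^ m * a ^ 2 := by rw [h]

lemma memL2_weight (φ : SchwartzMap ℝ ℂ) (m : ℕ) :
    MemLp (fun x : ℝ => Real.sqrt (1 + x ^ 2) ^ m * ‖φ x‖) 2 volume := by
  rw [memLp_two_iff_integrable_sq]
  · refine (integrable_weight_sq φ m).congr ?_
    filter_upwards with x
    rw [sqrt_weight_sq]
  · exact (by continuity : Continuous fun x : ℝ =>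
      Real.sqrt (1 + x ^ 2) ^ m * ‖φ x‖).aestronglyMeasurable

lemma integrable_rho_mul (φ ψ : SchwartzMap ℝ ℂ) (m : ℕ) (ρ : ℝ → ℝ) (hc : Continuous ρ) (B : ℝ)
    (hρ : ∀ x, |ρ x| ≤ B * (1 + x ^ 2) ^ m) :
    Integrable (fun x : ℝ => (ρ x : ℂ) * (φ x * (starRingEnd ℂ) (ψ x))) volume := by
  obtain ⟨C, hC0, hC⟩ := schwartz_bound ψ
  refine (((integrable_weight φ m).const_mul (B * C)).mono' ?_ ?_)
  · apply Continuous.aestronglyMeasurable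
    exact (Complex.continuous_ofReal.comp hc).mul
      (φ.continuous.mul (continuous_star.comp ψ.continuous))
  · filter_upwards with x
    have h1 : ‖(ρ x : ℂ) * (φ x * (starRingEnd ℂ) (ψ x))‖ = |ρ x| * (‖φ x‖ * ‖ψ x‖) := by
      simp [norm_mul, Complex.norm_real]
    rw [h1]
    have h2 := hρ x
    have h3 := hC x
    have h4 : (0:ℝ) ≤ (1 + x^2)^m := by positivity
    have h5 : (0:ℝ) ≤ B * (1 + x ^ 2) ^ m := le_trans (abs_nonneg _) h2
    calc |ρ x| * (‖φ x‖ * ‖ψ x‖)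
        ≤ (B * (1 + x ^ 2) ^ m) * (‖φ x‖ * C) := by
          apply mul_le_mul h2 _ (by positivity) h5
          exact mul_le_mul_of_nonneg_left h3 (norm_nonneg _)
      _ = B * C * ((1 + x ^ 2) ^ m * ‖φ x‖) := by ring

lemma integrable_prod (φ ψ : SchwartzMap ℝ ℂ) (p q : ℕ) :
    Integrable (fun x : ℝ => (Real.sqrt (1 + x ^ 2) ^ p * ‖φ x‖)
      * (Real.sqrt (1 + x ^ 2) ^ q * ‖ψ x‖)) volume := by
  obtain ⟨C, hC0, hC⟩ := schwartz_bound ψ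
  refine (((integrable_weight φ (p + q)).const_mul C).mono' ?_ ?_)
  · exact (by continuity : Continuous fun x : ℝ => (Real.sqrt (1 + x ^ 2) ^ p * ‖φ x‖)
      * (Real.sqrt (1 + x ^ 2) ^ q * ‖ψ x‖)).aestronglyMeasurable
  · filter_upwards with x
    set s := Real.sqrt (1 + x ^ 2) with hs_def
    have hs0 : 0 ≤ s := Real.sqrt_nonneg _
    have hs2 : s ^ 2 = 1 + x ^ 2 := Real.sq_sqrt (by positivity)
    have hs1 : 1 ≤ s := by nlinarith [hs2, sq_nonneg x, hs0]
    have hkey : s ^ p * s ^ q ≤ (1 + x ^ 2) ^ (p + q) := by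
      rw [← pow_add, ← hs2, ← pow_mul]
      exact pow_le_pow_right₀ hs1 (by omega)
    rw [Real.norm_eq_abs, _root_.abs_of_nonneg (by positivity)]
    calc (s ^ p * ‖φ x‖) * (s ^ q * ‖ψ x‖)
        = (s ^ p * s ^ q) * ‖φ x‖ * ‖ψ x‖ := by ring
      _ ≤ (1 + x ^ 2) ^ (p + q) * ‖φ x‖ * C := by
          apply mul_le_mul _ (hC x) (norm_nonneg _)
          · positivity
          · exact mul_le_mul_of_nonneg_right hkey (norm_nonneg _)
      _ = C * ((1 + x ^ 2) ^ (p + q) * ‖φ x‖) := by ring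

lemma cauchy_schwarz_int (a b : ℝ → ℝ) (ha : ∀ x, 0 ≤ a x) (hb : ∀ x, 0 ≤ b x)
    (hma : MemLp a 2 volume) (hmb : MemLp b 2 volume) :
    ∫ x, a x * b x ≤ Real.sqrt (∫ x, a x ^ 2) * Real.sqrt (∫ x, b x ^ 2) := by
  have hpq : Real.HolderConjugate 2 2 := Real.HolderConjugate.two_two
  have h2 : ENNReal.ofReal (2:ℝ) = 2 := by norm_num
  have h := integral_mul_le_Lp_mul_Lq_of_nonneg (μ := volume) hpq
    (Filter.Eventually.of_forall ha) (Filter.Eventually.of_forall hb)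
    (by rw [h2]; exact hma) (by rw [h2]; exact hmb)
  have hrw : ∀ y : ℝ, y ^ (2:ℝ) = y ^ (2:ℕ) := fun y => by
    rw [← Real.rpow_natCast y 2]; norm_num
  simp only [hrw] at h
  refine h.trans_eq ?_
  rw [Real.sqrt_eq_rpow, Real.sqrt_eq_rpow]

lemma eLpNorm_weight_eq (φ : SchwartzMap ℝ ℂ) (m : ℕ) :
    eLpNorm (fun x : ℝ => (Real.sqrt (1 + x ^ 2) ^ m : ℝ) * φ x) 2 volume
      = ENNReal.ofReal (Real.sqrt (∫ x : ℝ, (1 + x ^ 2) ^ m * ‖φ x‖ ^ 2)) := by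
  have hnorm : ∀ x : ℝ, ‖(((Real.sqrt (1 + x ^ 2) ^ m : ℝ)) : ℂ) * φ x‖
      = Real.sqrt (1 + x ^ 2) ^ m * ‖φ x‖ := by
    intro x
    rw [norm_mul, Complex.norm_real, Real.norm_eq_abs,
      _root_.abs_of_nonneg (by positivity)]
  have hmem : MemLp (fun x : ℝ => (Real.sqrt (1 + x ^ 2) ^ m : ℝ) * φ x) 2 volume := by
    rw [memLp_two_iff_integrable_sq_norm]
    · refine (integrable_weight_sq φ m).congr ?_
      filter_upwards with x
      rw [hnorm, sqrt_weight_sq]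
    · apply Continuous.aestronglyMeasurable
      exact (Complex.continuous_ofReal.comp (by continuity)).mul φ.continuous
  rw [hmem.eLpNorm_eq_integral_rpow_norm two_ne_zero ENNReal.ofNat_ne_top]
  congr 1
  have htr : (2:ENNReal).toReal = (2:ℝ) := by norm_num
  rw [htr]
  have hrw : ∀ y : ℝ, y ^ (2:ℝ) = y ^ (2:ℕ) := fun y => by
    rw [← Real.rpow_natCast y 2]; norm_num
  have hint : (∫ x : ℝ, ‖(((Real.sqrt (1 + x ^ 2) ^ m : ℝ)) : ℂ) * φ x‖ ^ (2:ℝ))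
      = ∫ x : ℝ, (1 + x ^ 2) ^ m * ‖φ x‖ ^ 2 := by
    congr 1
    funext x
    rw [hrw, hnorm, sqrt_weight_sq]
  rw [hint, Real.sqrt_eq_rpow]
  norm_num

lemma ibp_core (g g1 g2 : SchwartzMap ℝ ℂ) (K : ℕ) (hK : 1 ≤ K)
    (h1 : ∀ x, HasDerivAt (⇑g) (g1 x) x) (h2 : ∀ x, HasDerivAt (⇑g1) (g2 x) x) :
    ((∫ x : ℝ, (1 + x ^ 2) ^ K * ‖g1 x‖ ^ 2 : ℝ) : ℂ)
      = - ∫ x : ℝ, (((K : ℝ) * (1 + x ^ 2) ^ (K - 1) * (2 * x) : ℝ) : ℂ) * g1 x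
            * (starRingEnd ℂ) (g x)
          + (((1 + x ^ 2) ^ K : ℝ) : ℂ) * g2 x * (starRingEnd ℂ) (g x) := by
  set w : ℝ → ℝ := fun x => (1 + x ^ 2) ^ K with hw_def
  set w' : ℝ → ℝ := fun x => (K : ℝ) * (1 + x ^ 2) ^ (K - 1) * (2 * x) with hw'_def
  have hw : ∀ x, HasDerivAt w (w' x) x := by
    intro x
    have ha : HasDerivAt (fun y : ℝ => 1 + y ^ 2) (2 * x) x := by
      simpa using (hasDerivAt_pow 2 x).const_add 1
    simpa [hw_def, hw'_def] using ha.fun_pow K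
  set u : ℝ → ℂ := fun x => (w x : ℂ) * g1 x with hu_def
  set u' : ℝ → ℂ := fun x => (w' x : ℂ) * g1 x + (w x : ℂ) * g2 x with hu'_def
  set v : ℝ → ℂ := fun x => (starRingEnd ℂ) (g x) with hv_def
  set v' : ℝ → ℂ := fun x => (starRingEnd ℂ) (g1 x) with hv'_def
  have hu : ∀ x, HasDerivAt u (u' x) x := fun x => ((hw x).ofReal_comp).mul (h2 x)
  have hv : ∀ x, HasDerivAt v (v' x) x := by
    intro x
    have := HasFDerivAt.comp_hasDerivAt (l := ⇑Complex.conjCLE.toContinuousLinearMap)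
      (f := ⇑g) (l' := Complex.conjCLE.toContinuousLinearMap) (f' := g1 x) (x := x)
      (Complex.conjCLE.toContinuousLinearMap.hasFDerivAt) (h1 x)
    simpa [Function.comp_def, Complex.conjCAE_apply, hv_def, hv'_def] using this
  have hwbound : ∀ x : ℝ, |w x| ≤ 1 * (1 + x ^ 2) ^ K := by
    intro x
    rw [one_mul, _root_.abs_of_nonneg (by positivity)]
  have hw'bound : ∀ x : ℝ, |w' x| ≤ (2 * K) * (1 + x ^ 2) ^ K := by
    intro x
    have hxle : |x| ≤ 1 + x ^ 2 := by nlinarith [sq_nonneg (|x| - 1), _root_.sq_abs x]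
    have hpow : (1 + x ^ 2) ^ (K - 1) * (1 + x ^ 2) = (1 + x ^ 2) ^ K := by
      rw [← pow_succ, Nat.sub_add_cancel hK]
    have h0 : (0:ℝ) ≤ (1 + x ^ 2) ^ (K - 1) := by positivity
    calc |w' x| = (K : ℝ) * (1 + x ^ 2) ^ (K - 1) * (2 * |x|) := by
          rw [hw'_def]
          rw [abs_mul, abs_mul, _root_.abs_of_nonneg (by positivity : (0:ℝ) ≤ (K:ℝ)),
            _root_.abs_of_nonneg h0, abs_mul, _root_.abs_of_nonneg (by norm_num : (0:ℝ) ≤ 2)]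
      _ ≤ (K : ℝ) * (1 + x ^ 2) ^ (K - 1) * (2 * (1 + x ^ 2)) := by
          apply mul_le_mul_of_nonneg_left (by linarith) (by positivity)
      _ = (2 * K) * ((1 + x ^ 2) ^ (K - 1) * (1 + x ^ 2)) := by ring
      _ = (2 * K) * (1 + x ^ 2) ^ K := by rw [hpow]
  have hcw : Continuous w := by continuity
  have hcw' : Continuous w' := by continuity
  have huv' : Integrable (u * v') volume := by
    refine (integrable_rho_mul g1 g1 K w hcw 1 hwbound).congr ?_
    filter_upwards with x
    simp [hu_def, hv'_def, mul_assoc]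
  have hu'v : Integrable (u' * v) volume := by
    have i1 := integrable_rho_mul g1 g K w' hcw' (2 * K) hw'bound
    have i2 := integrable_rho_mul g2 g K w hcw 1 hwbound
    refine (i1.add i2).congr ?_
    filter_upwards with x
    simp [hu'_def, hv_def, mul_assoc, add_mul]
  have huv : Integrable (u * v) volume := by
    refine (integrable_rho_mul g1 g K w hcw 1 hwbound).congr ?_
    filter_upwards with x
    simp [hu_def, hv_def, mul_assoc]
  have key := integral_mul_deriv_eq_deriv_mul_of_integrable (fun x _ => hu x) (fun x _ => hv x) huv' hu'v huv
  have lhs_eq : ∫ x : ℝ, u x * v' x = ((∫ x : ℝ, (1 + x ^ 2) ^ K * ‖g1 x‖ ^ 2 : ℝ) : ℂ) := by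
    have heq : (fun x => u x * v' x)
        = fun x : ℝ => (((1 + x ^ 2) ^ K * ‖g1 x‖ ^ 2 : ℝ) : ℂ) := by
      funext x
      show (w x : ℂ) * g1 x * (starRingEnd ℂ) (g1 x) = (((1 + x ^ 2) ^ K * ‖g1 x‖ ^ 2 : ℝ) : ℂ)
      rw [mul_assoc, Complex.mul_conj]
      rw [Complex.normSq_eq_norm_sq]
      simp only [hw_def]
      push_cast
      ring
    rw [heq]
    exact integral_ofReal
  rw [← lhs_eq, key]
  congr 1
  apply integral_congr_ae
  filter_upwards with x
  show (↑(w' x) * g1 x + ↑(w x) * g2 x) * (starRingEnd ℂ) (g x)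
      = ↑(w' x) * g1 x * (starRingEnd ℂ) (g x) + ↑(w x) * g2 x * (starRingEnd ℂ) (g x)
  ring


set_option maxHeartbeats 2000000 in
lemma main_core (f : SchwartzMap ℝ ℂ) (l m : ℕ) :
    (eLpNorm (fun x : ℝ => (Real.sqrt (1 + x ^ 2) ^ (l + 1) : ℝ)
        * iteratedDeriv (m + 1) (⇑f) x) 2 volume) ^ 2 ≤
      ENNReal.ofReal (4 * ((l : ℝ) + 1) ^ 2) *
        (eLpNorm (fun x : ℝ => (Real.sqrt (1 + x ^ 2) ^ l : ℝ)
          * iteratedDeriv (m + 1 + 1) (⇑f) x) 2 volume) *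
        (eLpNorm (fun x : ℝ => (Real.sqrt (1 + x ^ 2) ^ (l + 2) : ℝ)
          * iteratedDeriv m (⇑f) x) 2 volume) +
      ENNReal.ofReal (4 * ((l : ℝ) + 1) ^ 2) *
        (eLpNorm (fun x : ℝ => (Real.sqrt (1 + x ^ 2) ^ l : ℝ)
          * iteratedDeriv m (⇑f) x) 2 volume) ^ 2 := by
  set g : SchwartzMap ℝ ℂ := D^[m] f with hg_def
  set g1 : SchwartzMap ℝ ℂ := D g with hg1_def
  set g2 : SchwartzMap ℝ ℂ := D g1 with hg2_def
  have hg : iteratedDeriv m (⇑f) = ⇑g := (coe_iter_D f m).symm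
  have hg1 : iteratedDeriv (m + 1) (⇑f) = ⇑g1 := by
    rw [← coe_iter_D f (m + 1), hg1_def, hg_def, Function.iterate_succ_apply' D m f]
  have hg2 : iteratedDeriv (m + 1 + 1) (⇑f) = ⇑g2 := by
    rw [← coe_iter_D f (m + 1 + 1), hg2_def, hg1_def, hg_def,
      Function.iterate_succ_apply' D (m + 1) f, Function.iterate_succ_apply' D m f]
  have hDg : ∀ x, HasDerivAt (⇑g) (g1 x) x := by
    intro x
    have h := (g.differentiableAt (x := x)).hasDerivAt
    have : g1 x = deriv (⇑g) x := SchwartzMap.derivCLM_apply ℝ g x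
    rwa [← this] at h
  have hDg1 : ∀ x, HasDerivAt (⇑g1) (g2 x) x := by
    intro x
    have h := (g1.differentiableAt (x := x)).hasDerivAt
    have : g2 x = deriv (⇑g1) x := SchwartzMap.derivCLM_apply ℝ g1 x
    rwa [← this] at h
  rw [hg, hg1, hg2]
  rw [eLpNorm_weight_eq g1 (l + 1), eLpNorm_weight_eq g2 l,
    eLpNorm_weight_eq g (l + 2), eLpNorm_weight_eq g l]
  set X := Real.sqrt (∫ x : ℝ, (1 + x ^ 2) ^ (l + 1) * ‖g1 x‖ ^ 2) with hX_def
  set A := Real.sqrt (∫ x : ℝ, (1 + x ^ 2) ^ l * ‖g2 x‖ ^ 2) with hA_def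
  set Bv := Real.sqrt (∫ x : ℝ, (1 + x ^ 2) ^ (l + 2) * ‖g x‖ ^ 2) with hB_def
  set Y := Real.sqrt (∫ x : ℝ, (1 + x ^ 2) ^ l * ‖g x‖ ^ 2) with hY_def
  have hX0 : 0 ≤ X := Real.sqrt_nonneg _
  have hA0 : 0 ≤ A := Real.sqrt_nonneg _
  have hB0 : 0 ≤ Bv := Real.sqrt_nonneg _
  have hY0 : 0 ≤ Y := Real.sqrt_nonneg _
  have hc0 : (0:ℝ) ≤ 4 * ((l : ℝ) + 1) ^ 2 := by positivity
  -- the core real inequality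
  have hI0 : (0:ℝ) ≤ ∫ x : ℝ, (1 + x ^ 2) ^ (l + 1) * ‖g1 x‖ ^ 2 :=
    integral_nonneg fun x => by positivity
  have hX2 : X ^ 2 = ∫ x : ℝ, (1 + x ^ 2) ^ (l + 1) * ‖g1 x‖ ^ 2 := Real.sq_sqrt hI0
  have hibp := ibp_core g g1 g2 (l + 1) (Nat.le_add_left 1 l) hDg hDg1
  simp only [Nat.add_sub_cancel] at hibp
  -- integrable facts for the IBP integrand
  set ρ : ℝ → ℝ := fun x => ((l + 1 : ℕ) : ℝ) * (1 + x ^ 2) ^ l * (2 * x) with hρ_def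
  have hρc : Continuous ρ := by continuity
  have hρb : ∀ x : ℝ, |ρ x| ≤ (2 * (l + 1 : ℕ)) * (1 + x ^ 2) ^ (l + 1) := by
    intro x
    have hxle : |x| ≤ 1 + x ^ 2 := by nlinarith [sq_nonneg (|x| - 1), _root_.sq_abs x]
    have h0 : (0:ℝ) ≤ (1 + x ^ 2) ^ l := by positivity
    calc |ρ x| = ((l + 1 : ℕ) : ℝ) * (1 + x ^ 2) ^ l * (2 * |x|) := by
          rw [hρ_def, abs_mul, abs_mul, _root_.abs_of_nonneg (by positivity : (0:ℝ) ≤ ((l+1:ℕ):ℝ)),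
            _root_.abs_of_nonneg h0, abs_mul, _root_.abs_of_nonneg (by norm_num : (0:ℝ) ≤ 2)]
      _ ≤ ((l + 1 : ℕ) : ℝ) * (1 + x ^ 2) ^ l * (2 * (1 + x ^ 2)) := by
          apply mul_le_mul_of_nonneg_left (by linarith) (by positivity)
      _ = (2 * (l + 1 : ℕ)) * ((1 + x ^ 2) ^ l * (1 + x ^ 2)) := by push_cast; ring
      _ = (2 * (l + 1 : ℕ)) * (1 + x ^ 2) ^ (l + 1) := by rw [← pow_succ]
  have hwb : ∀ x : ℝ, |(1 + x ^ 2) ^ (l + 1)| ≤ 1 * (1 + x ^ 2) ^ (l + 1) := by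
    intro x
    rw [one_mul, _root_.abs_of_nonneg (by positivity)]
  have hwc : Continuous fun x : ℝ => (1 + x ^ 2) ^ (l + 1) := by continuity
  have hSint : Integrable (fun x : ℝ =>
      ((ρ x : ℝ) : ℂ) * g1 x * (starRingEnd ℂ) (g x)
        + (((1 + x ^ 2) ^ (l + 1) : ℝ) : ℂ) * g2 x * (starRingEnd ℂ) (g x)) volume := by
    have i1 := integrable_rho_mul g1 g (l + 1) ρ hρc (2 * (l + 1 : ℕ)) hρb
    have i2 := integrable_rho_mul g2 g (l + 1) (fun x => (1 + x ^ 2) ^ (l + 1)) hwc 1 hwb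
    refine (i1.add i2).congr ?_
    filter_upwards with x
    simp [mul_assoc]
  -- pointwise bound
  set P1 : ℝ → ℝ := fun x => (Real.sqrt (1 + x ^ 2) ^ (l + 1) * ‖g1 x‖)
    * (Real.sqrt (1 + x ^ 2) ^ l * ‖g x‖) with hP1_def
  set P2 : ℝ → ℝ := fun x => (Real.sqrt (1 + x ^ 2) ^ l * ‖g2 x‖)
    * (Real.sqrt (1 + x ^ 2) ^ (l + 2) * ‖g x‖) with hP2_def
  have hpt : ∀ x : ℝ, ‖((ρ x : ℝ) : ℂ) * g1 x * (starRingEnd ℂ) (g x)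
        + (((1 + x ^ 2) ^ (l + 1) : ℝ) : ℂ) * g2 x * (starRingEnd ℂ) (g x)‖
      ≤ 2 * ((l : ℝ) + 1) * P1 x + P2 x := by
    intro x
    set s := Real.sqrt (1 + x ^ 2) with hs_def
    have hs0 : 0 ≤ s := Real.sqrt_nonneg _
    have hs2 : s ^ 2 = 1 + x ^ 2 := Real.sq_sqrt (by positivity)
    have hxle : |x| ≤ s := by
      rw [← Real.sqrt_sq_eq_abs, hs_def]
      exact Real.sqrt_le_sqrt (by nlinarith)
    have e1 : (1 + x ^ 2) ^ l = s ^ (2 * l) := by rw [pow_mul, hs2]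
    have e2 : (1 + x ^ 2) ^ (l + 1) = s ^ (2 * (l + 1)) := by rw [pow_mul, hs2]
    have hn1 : ‖((ρ x : ℝ) : ℂ) * g1 x * (starRingEnd ℂ) (g x)‖
        = |ρ x| * ‖g1 x‖ * ‖g x‖ := by
      rw [norm_mul, norm_mul, Complex.norm_real, Real.norm_eq_abs, RCLike.norm_conj]
    have hn2 : ‖(((1 + x ^ 2) ^ (l + 1) : ℝ) : ℂ) * g2 x * (starRingEnd ℂ) (g x)‖
        = (1 + x ^ 2) ^ (l + 1) * ‖g2 x‖ * ‖g x‖ := by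
      rw [norm_mul, norm_mul, Complex.norm_real, Real.norm_eq_abs, RCLike.norm_conj,
        _root_.abs_of_nonneg (by positivity)]
    refine (norm_add_le _ _).trans ?_
    rw [hn1, hn2]
    have hb1 : |ρ x| * ‖g1 x‖ * ‖g x‖ ≤ 2 * ((l : ℝ) + 1) * P1 x := by
      have h1 : |ρ x| ≤ 2 * ((l : ℝ) + 1) * (s ^ (2 * l) * s) := by
        calc |ρ x| ≤ ((l + 1 : ℕ) : ℝ) * (1 + x ^ 2) ^ l * (2 * |x|) := by
              rw [hρ_def, abs_mul, abs_mul,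
                _root_.abs_of_nonneg (by positivity : (0:ℝ) ≤ ((l+1:ℕ):ℝ)),
                _root_.abs_of_nonneg (by positivity : (0:ℝ) ≤ (1 + x^2)^l), abs_mul,
                _root_.abs_of_nonneg (by norm_num : (0:ℝ) ≤ 2)]
          _ ≤ ((l + 1 : ℕ) : ℝ) * (s ^ (2 * l)) * (2 * s) := by
              rw [← e1]
              apply mul_le_mul_of_nonneg_left (by linarith) (by positivity)
          _ = 2 * ((l : ℝ) + 1) * (s ^ (2 * l) * s) := by push_cast; ring
      calc |ρ x| * ‖g1 x‖ * ‖g x‖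
          ≤ (2 * ((l : ℝ) + 1) * (s ^ (2 * l) * s)) * ‖g1 x‖ * ‖g x‖ := by
            apply mul_le_mul_of_nonneg_right
              (mul_le_mul_of_nonneg_right h1 (norm_nonneg _)) (norm_nonneg _)
        _ = 2 * ((l : ℝ) + 1) * P1 x := by rw [hP1_def]; ring
    have hb2 : (1 + x ^ 2) ^ (l + 1) * ‖g2 x‖ * ‖g x‖ = P2 x := by
      rw [hP2_def, e2]; ring
    linarith [hb1, hb2.ge, hb2.le]
  -- integral bound
  have hP1int : Integrable P1 volume := integrable_prod g1 g (l + 1) l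
  have hP2int : Integrable P2 volume := integrable_prod g2 g l (l + 2)
  have hTint : Integrable (fun x => 2 * ((l : ℝ) + 1) * P1 x + P2 x) volume :=
    (hP1int.const_mul _).add hP2int
  have hmain : X ^ 2 ≤ 2 * ((l : ℝ) + 1) * (∫ x, P1 x) + ∫ x, P2 x := by
    have step1 : X ^ 2 = ‖((∫ x : ℝ, (1 + x ^ 2) ^ (l + 1) * ‖g1 x‖ ^ 2 : ℝ) : ℂ)‖ := by
      rw [Complex.norm_real, Real.norm_eq_abs, _root_.abs_of_nonneg hI0, hX2]
    rw [step1, hibp, norm_neg]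
    calc ‖∫ x : ℝ, ((ρ x : ℝ) : ℂ) * g1 x * (starRingEnd ℂ) (g x)
            + (((1 + x ^ 2) ^ (l + 1) : ℝ) : ℂ) * g2 x * (starRingEnd ℂ) (g x)‖
        ≤ ∫ x : ℝ, ‖((ρ x : ℝ) : ℂ) * g1 x * (starRingEnd ℂ) (g x)
            + (((1 + x ^ 2) ^ (l + 1) : ℝ) : ℂ) * g2 x * (starRingEnd ℂ) (g x)‖ :=
          norm_integral_le_integral_norm _
      _ ≤ ∫ x : ℝ, (2 * ((l : ℝ) + 1) * P1 x + P2 x) := by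
          exact integral_mono hSint.norm hTint hpt
      _ = 2 * ((l : ℝ) + 1) * (∫ x, P1 x) + ∫ x, P2 x := by
          rw [integral_add (hP1int.const_mul _) hP2int, integral_const_mul]
  -- Cauchy–Schwarz
  have hCS1 : ∫ x, P1 x ≤ X * Y := by
    have h := cauchy_schwarz_int
      (fun x => Real.sqrt (1 + x ^ 2) ^ (l + 1) * ‖g1 x‖)
      (fun x => Real.sqrt (1 + x ^ 2) ^ l * ‖g x‖)
      (fun x => by positivity) (fun x => by positivity)
      (memL2_weight g1 (l + 1)) (memL2_weight g l)
    simp only [sqrt_weight_sq] at h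
    exact h
  have hCS2 : ∫ x, P2 x ≤ A * Bv := by
    have h := cauchy_schwarz_int
      (fun x => Real.sqrt (1 + x ^ 2) ^ l * ‖g2 x‖)
      (fun x => Real.sqrt (1 + x ^ 2) ^ (l + 2) * ‖g x‖)
      (fun x => by positivity) (fun x => by positivity)
      (memL2_weight g2 l) (memL2_weight g (l + 2))
    simp only [sqrt_weight_sq] at h
    exact h
  have hfinal : X ^ 2 ≤ 4 * ((l : ℝ) + 1) ^ 2 * (A * Bv) + 4 * ((l : ℝ) + 1) ^ 2 * Y ^ 2 := by
    have hl0 : (0:ℝ) ≤ (l : ℝ) := Nat.cast_nonneg l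
    have h1 : X ^ 2 ≤ 2 * ((l : ℝ) + 1) * (X * Y) + A * Bv := by
      have := mul_le_mul_of_nonneg_left hCS1 (by positivity : (0:ℝ) ≤ 2 * ((l : ℝ) + 1))
      linarith [hmain, hCS2]
    have hL1 : (1:ℝ) ≤ ((l : ℝ) + 1) ^ 2 := by nlinarith
    have hAB0 : (0:ℝ) ≤ A * Bv := mul_nonneg hA0 hB0
    have h2 : A * Bv ≤ ((l : ℝ) + 1) ^ 2 * (A * Bv) := le_mul_of_one_le_left hAB0 hL1
    nlinarith [sq_nonneg (X - 2 * ((l : ℝ) + 1) * Y), hAB0, h1, h2,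
      mul_nonneg (mul_nonneg hA0 hB0) (sq_nonneg ((l : ℝ) + 1))]
  have hAB0' : (0:ℝ) ≤ A * Bv := mul_nonneg hA0 hB0
  -- ENNReal conclusion
  calc ENNReal.ofReal X ^ 2 = ENNReal.ofReal (X ^ 2) := (ENNReal.ofReal_pow hX0 2).symm
    _ ≤ ENNReal.ofReal (4 * ((l : ℝ) + 1) ^ 2 * (A * Bv) + 4 * ((l : ℝ) + 1) ^ 2 * Y ^ 2) :=
        ENNReal.ofReal_le_ofReal hfinal
    _ = ENNReal.ofReal (4 * ((l : ℝ) + 1) ^ 2 * (A * Bv))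
        + ENNReal.ofReal (4 * ((l : ℝ) + 1) ^ 2 * Y ^ 2) := by
        rw [ENNReal.ofReal_add (mul_nonneg hc0 hAB0') (mul_nonneg hc0 (sq_nonneg Y))]
    _ = ENNReal.ofReal (4 * ((l : ℝ) + 1) ^ 2) * ENNReal.ofReal A * ENNReal.ofReal Bv
        + ENNReal.ofReal (4 * ((l : ℝ) + 1) ^ 2) * ENNReal.ofReal Y ^ 2 := by
        rw [ENNReal.ofReal_mul hc0, ENNReal.ofReal_mul hc0, ENNReal.ofReal_mul hA0,
          ENNReal.ofReal_pow hY0, mul_assoc]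

end WeightedGN

/-- Asymmetric weighted Gagliardo–Nirenberg inequality:
`‖⟨x⟩^k ∂^j f‖₂² ≤ c ‖⟨x⟩^{k-1} ∂^{j+1} f‖₂ ‖⟨x⟩^{k+1} ∂^{j-1} f‖₂ + c ‖⟨x⟩^{k-1} ∂^{j-1} f‖₂²`. -/
theorem weighted_interpolation_deriv_asymmetric (j k : ℕ) (hj : 1 ≤ j) (hk : 1 ≤ k) :
    ∃ c : ℝ, 0 < c ∧ ∀ f : SchwartzMap ℝ ℂ,
      (eLpNorm (fun x => (Real.sqrt (1 + x ^ 2) ^ k : ℝ) * iteratedDeriv j (⇑f) x)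
          2 volume) ^ 2 ≤
        ENNReal.ofReal c *
          (eLpNorm (fun x => (Real.sqrt (1 + x ^ 2) ^ (k - 1) : ℝ) *
            iteratedDeriv (j + 1) (⇑f) x) 2 volume) *
          (eLpNorm (fun x => (Real.sqrt (1 + x ^ 2) ^ (k + 1) : ℝ) *
            iteratedDeriv (j - 1) (⇑f) x) 2 volume) +
        ENNReal.ofReal c *
          (eLpNorm (fun x => (Real.sqrt (1 + x ^ 2) ^ (k - 1) : ℝ) *
            iteratedDeriv (j - 1) (⇑f) x) 2 volume) ^ 2 := by
  obtain ⟨l, rfl⟩ : ∃ l, k = l + 1 := ⟨k - 1, (Nat.succ_pred_eq_of_pos hk).symm⟩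
  obtain ⟨m, rfl⟩ : ∃ m, j = m + 1 := ⟨j - 1, (Nat.succ_pred_eq_of_pos hj).symm⟩
  refine ⟨4 * ((l : ℝ) + 1) ^ 2, by positivity, fun f => ?_⟩
  simpa only [Nat.add_sub_cancel] using WeightedGN.main_core f l m
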